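/- Let U : MonCat ⥤ Type be the forgetful functor on the category of monoids and for each natural number n let U^n : MonCat ⥤ Type be the functor sending a monoid M to the type Fin n → U(M) and a monoid homomorphism f to postcomposition with U(f). The map sending a word w : FreeMonoid (Fin n) (equivalently, a list over Fin n) to the natural transformation U^n ⟶ U whose component at a monoid M sends x : Fin n → M to the product of the letters of w evaluated under x (i.e. FreeMonoid.lift x w) is a bijection between FreeMonoid (Fin n) and the natural transformations U^n ⟶ U. -/

import Mathlib

open CategoryTheory

/-- The `n`-th power of the forgetful functor on the category of monoids, sending a monoid `M`
to `Fin n → M` and a homomorphism to postcomposition with it. -/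
def forgetPow (n : ℕ) : MonCat.{u} ⥤ Type u where
  obj M := Fin n → M
  map f := TypeCat.ofHom fun x i => f (x i)

lemma lift_up_down {n : ℕ} (w : FreeMonoid (Fin n)) :
    (FreeMonoid.lift (fun i => ULift.up.{u} (FreeMonoid.of i)) w).down = w := by
  have : (MulEquiv.ulift.toMonoidHom.comp
      (FreeMonoid.lift (fun i => ULift.up.{u} (FreeMonoid.of i)))) =
      MonoidHom.id (FreeMonoid (Fin n)) := by
    apply FreeMonoid.hom_eq
    intro i
    rfl
  exact congrArg (fun h => h w) this

/-- Reconstruction of the `n`-ary operations `T_U(n, 1) = Nat(Uⁿ, U)` of the Lawvere theory of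
monoids from the forgetful functor `U` on the category of monoids: natural transformations
`Uⁿ ⟶ U` correspond exactly to words in the free monoid on `n` generators. -/
theorem monoidOperations_bijective (n : ℕ) :
    Function.Bijective (fun w : FreeMonoid (Fin n) =>
      ({ app := fun M => TypeCat.ofHom fun x => FreeMonoid.lift x w
         naturality := by
           intro M N f
           ext x
           exact (FreeMonoid.hom_map_lift f.hom x w).symm } :
        forgetPow.{u} n ⟶ forget MonCat.{u})) := by
  set E : MonCat.{u} := MonCat.of (ULift.{u} (FreeMonoid (Fin n)))
  set e : Fin n → E := fun i => ULift.up (FreeMonoid.of i)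
  constructor
  · intro w₁ w₂ h
    have h2 := congrArg (fun α : forgetPow.{u} n ⟶ forget MonCat.{u} =>
      ULift.down (α.app E e)) h
    simp only [e] at h2
    exact (lift_up_down w₁).symm.trans (h2.trans (lift_up_down w₂))
  · intro α
    refine ⟨(α.app E e).down, ?_⟩
    ext M x
    have hn := ConcreteCategory.congr_hom (α.naturality (X := E) (Y := M)
      (MonCat.ofHom ((FreeMonoid.lift x).comp MulEquiv.ulift.toMonoidHom))) e
    simp only [ConcreteCategory.comp_apply] at hn
    have h1 : (forgetPow.{u} n).map
        (MonCat.ofHom ((FreeMonoid.lift x).comp MulEquiv.ulift.toMonoidHom)) e = x := by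
      funext i
      show FreeMonoid.lift x (FreeMonoid.of i) = x i
      exact FreeMonoid.lift_eval_of x i
    have hn2 := congrArg (fun y => α.app M y) h1
    exact hn.symm.trans hn2
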